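/- Let d ≥ 2 be a natural number. For a real number z with 0 < z < 1, define Q_G(z) = (1/(1+z)^(d−1)) · ∑_{k=0}^{d−1} z^k · C(d−1, k) · ln((d−k)/(k+1)) and Q_U(z) = ((1−z)^(d+1)/d) · ∑_{k=1}^{∞} z^(k−1) · k · C(d+k−1, k) · ln((d+k−1)/k). Then, as z tends to 1 from the left, the ratio Q_G(z)/Q_U(z) converges to (d/(d−1)) · 2^(1−d) · ∑_{k=0}^{⌊(d−1)/2⌋} (d−1−2k) · C(d−1, k) · ln((d−k)/(k+1)). -/

import Mathlib

open Real Finset Filter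

lemma aux_hasSum (n : ℕ) {z : ℝ} (hz : |z| < 1) :
    HasSum (fun k : ℕ => ((n + k).choose k : ℝ) * z ^ k) (1 / (1 - z) ^ (n + 1)) := by
  have h := hasSum_choose_mul_geometric_of_norm_lt_one (𝕜 := ℝ) n (by simpa using hz)
  have e : (fun k : ℕ => ((n + k).choose k : ℝ) * z ^ k) = fun k => ((k + n).choose n : ℝ) * z ^ k := by
    funext k
    rw [add_comm n k, Nat.choose_symm_add]
  rw [e]; exact h

lemma choose_id1 (d k : ℕ) : ((d + k).choose (k + 1) : ℝ) * ((k : ℝ) + 1) = (d : ℝ) * ((d + k).choose k : ℝ) := by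
  have h := Nat.choose_succ_right_eq (d + k) k
  rw [Nat.add_sub_cancel] at h
  exact_mod_cast h.trans (Nat.mul_comm _ _)

lemma choose_id2 (d k : ℕ) (hd : 1 ≤ d) :
    ((d + k).choose (k + 2) : ℝ) * (((k : ℝ) + 1) * ((k : ℝ) + 2)) =
      (d : ℝ) * ((d : ℝ) - 1) * ((d + k).choose k : ℝ) := by
  have h1 := Nat.choose_succ_right_eq (d + k) k
  rw [Nat.add_sub_cancel] at h1
  have h2 := Nat.choose_succ_right_eq (d + k) (k + 1)
  have hsub : d + k - (k + 1) = d - 1 := by omega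
  rw [hsub] at h2
  have hcast : ((d - 1 : ℕ) : ℝ) = (d : ℝ) - 1 := by
    have := Nat.cast_sub (R := ℝ) hd; simpa using this
  have h1' : ((d + k).choose (k + 1) : ℝ) * ((k : ℝ) + 1) = (d : ℝ) * ((d + k).choose k : ℝ) := by
    exact_mod_cast h1.trans (Nat.mul_comm _ _)
  have h2' : ((d + k).choose (k + 2) : ℝ) * ((k : ℝ) + 2) = ((d + k).choose (k + 1) : ℝ) * ((d : ℝ) - 1) := by
    rw [← hcast]; exact_mod_cast h2
  nlinarith [h1', h2']

lemma log_ratio_bound (d k : ℕ) (hd : 1 ≤ d) :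
    |Real.log (((d : ℝ) + k) / ((k : ℝ) + 1)) - ((d : ℝ) - 1) / ((k : ℝ) + 1)| ≤
      (((d : ℝ) - 1) / ((k : ℝ) + 1)) ^ 2 := by
  set x : ℝ := ((d : ℝ) - 1) / ((k : ℝ) + 1) with hxdef
  have hk1 : (0 : ℝ) < (k : ℝ) + 1 := by positivity
  have hd1 : (1 : ℝ) ≤ (d : ℝ) := by exact_mod_cast hd
  have hx : 0 ≤ x := by apply div_nonneg <;> linarith
  have hratio : ((d : ℝ) + k) / ((k : ℝ) + 1) = 1 + x := by
    rw [hxdef, one_add_div hk1.ne']; congr 1; ring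
  rw [hratio]
  have h1x : (0 : ℝ) < 1 + x := by linarith
  have hup : Real.log (1 + x) ≤ x := by
    have := Real.log_le_sub_one_of_pos h1x; linarith
  have hlow : x - x ^ 2 ≤ Real.log (1 + x) := by
    have h := Real.one_sub_inv_le_log_of_pos h1x
    have : x - x ^ 2 ≤ 1 - (1 + x)⁻¹ := by
      rw [inv_eq_one_div]
      rw [le_sub_comm, div_le_iff₀ h1x]
      nlinarith
    linarith
  rw [abs_le]
  constructor <;> nlinarith

lemma log_ratio_nonneg (d k : ℕ) (hd : 1 ≤ d) :
    0 ≤ Real.log (((d : ℝ) + k) / ((k : ℝ) + 1)) := by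
  apply Real.log_nonneg
  rw [le_div_iff₀ (by positivity)]
  have : (1 : ℝ) ≤ (d : ℝ) := by exact_mod_cast hd
  linarith

lemma log_ratio_le (d k : ℕ) (hd : 1 ≤ d) :
    Real.log (((d : ℝ) + k) / ((k : ℝ) + 1)) ≤ (d : ℝ) := by
  have hk1 : (0 : ℝ) < (k : ℝ) + 1 := by positivity
  have hd1 : (1 : ℝ) ≤ (d : ℝ) := by exact_mod_cast hd
  have hpos : (0 : ℝ) < ((d : ℝ) + k) / ((k : ℝ) + 1) := by positivity
  have h := Real.log_le_sub_one_of_pos hpos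
  have : ((d : ℝ) + k) / ((k : ℝ) + 1) ≤ (d : ℝ) := by
    rw [div_le_iff₀ hk1]; nlinarith [show (0:ℝ) ≤ (k:ℝ) from Nat.cast_nonneg k]
  linarith

/-- Summability of the main weighted series. -/
lemma summable_f (d : ℕ) (hd : 1 ≤ d) {z : ℝ} (h0 : 0 < z) (h1 : z < 1) :
    Summable (fun k : ℕ => z ^ k * ((d + k).choose k : ℝ) *
      Real.log (((d : ℝ) + k) / ((k : ℝ) + 1))) := by
  have habs : |z| < 1 := by rw [abs_of_pos h0]; exact h1
  have H := (aux_hasSum d habs).summable.mul_left (d : ℝ)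
  apply Summable.of_nonneg_of_le _ _ H
  · intro k
    have := log_ratio_nonneg d k hd
    positivity
  · intro k
    have hle := log_ratio_le d k hd
    have hnn : (0 : ℝ) ≤ z ^ k * ((d + k).choose k : ℝ) := by positivity
    calc z ^ k * ((d + k).choose k : ℝ) * Real.log (((d : ℝ) + k) / ((k : ℝ) + 1))
        ≤ z ^ k * ((d + k).choose k : ℝ) * (d : ℝ) := by
          exact mul_le_mul_of_nonneg_left hle hnn
      _ = (d : ℝ) * (((d + k).choose k : ℝ) * z ^ k) := by ring

set_option maxHeartbeats 1000000 in
/-- The key error estimate for the tail sum. -/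
lemma tsum_error_bound (d : ℕ) (hd : 2 ≤ d) {z : ℝ} (h0 : 0 < z) (h1 : z < 1) :
    |(∑' k : ℕ, z ^ k * ((d + k).choose k : ℝ) *
        Real.log (((d : ℝ) + k) / ((k : ℝ) + 1))) -
      ((d : ℝ) - 1) / d * z⁻¹ * (1 / (1 - z) ^ d - 1)| ≤
      2 * ((d : ℝ) - 1) / d * z⁻¹ ^ 2 * (1 / (1 - z) ^ (d - 1)) := by
  have habs : |z| < 1 := by rw [abs_of_pos h0]; exact h1
  have hz : z ≠ 0 := ne_of_gt h0
  have hd1 : (1 : ℝ) ≤ (d : ℝ) := by exact_mod_cast (by omega : 1 ≤ d)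
  have hdR : (0 : ℝ) < (d : ℝ) := by positivity
  set f : ℕ → ℝ := fun k => z ^ k * ((d + k).choose k : ℝ) *
      Real.log (((d : ℝ) + k) / ((k : ℝ) + 1)) with hf
  set m : ℕ → ℝ := fun k => z ^ k * ((d + k).choose k : ℝ) * (((d : ℝ) - 1) / ((k : ℝ) + 1)) with hm
  have hfs : Summable f := summable_f d (by omega) h0 h1
  -- HasSum of main part
  have Hm1 : HasSum (fun k : ℕ => ((d - 1 + k).choose k : ℝ) * z ^ k) (1 / (1 - z) ^ d) := by
    have := aux_hasSum (d - 1) habs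
    rwa [show d - 1 + 1 = d by omega] at this
  have Hshift : HasSum (fun k : ℕ => ((d - 1 + (k + 1)).choose (k + 1) : ℝ) * z ^ (k + 1))
      (1 / (1 - z) ^ d - 1) := by
    have h := (hasSum_nat_add_iff' (f := fun n : ℕ => ((d - 1 + n).choose n : ℝ) * z ^ n) 1).2 Hm1
    simpa using h
  have hidx : ∀ k : ℕ, d - 1 + (k + 1) = d + k := fun k => by omega
  simp only [hidx] at Hshift
  have HA : HasSum m (((d : ℝ) - 1) / d * z⁻¹ * (1 / (1 - z) ^ d - 1)) := by
    have h := Hshift.mul_left (((d : ℝ) - 1) / d * z⁻¹)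
    have e : m = fun k => ((d : ℝ) - 1) / d * z⁻¹ * (((d + k).choose (k + 1) : ℝ) * z ^ (k + 1)) := by
      funext k
      have hc := choose_id1 d k
      have hk1 : ((k : ℝ) + 1) ≠ 0 := by positivity
      have hc' : ((d + k).choose (k + 1) : ℝ) = (d : ℝ) * ((d + k).choose k : ℝ) / ((k : ℝ) + 1) := by
        rw [eq_div_iff hk1, hc]
      rw [hm, hc', pow_succ]
      field_simp
    rw [e]; exact h
  -- error terms
  set e : ℕ → ℝ := fun k => f k - m k with he
  have hes : Summable e := hfs.sub HA.summable
  have hE : HasSum e ((∑' k, f k) - ((d : ℝ) - 1) / d * z⁻¹ * (1 / (1 - z) ^ d - 1)) :=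
    hfs.hasSum.sub HA
  -- pointwise bound on |e k|
  have hbe : ∀ k, |e k| ≤ 2 * ((d : ℝ) - 1) / d * (((d + k).choose (k + 2) : ℝ) * z ^ k) := by
    intro k
    have hk1 : (0 : ℝ) < (k : ℝ) + 1 := by positivity
    have hk2 : (0 : ℝ) < (k : ℝ) + 2 := by positivity
    have hlog := log_ratio_bound d k (by omega)
    have hzk : (0 : ℝ) < z ^ k := pow_pos h0 k
    have hC : (0 : ℝ) ≤ ((d + k).choose k : ℝ) := by positivity
    have h1' : |e k| ≤ z ^ k * ((d + k).choose k : ℝ) * (((d : ℝ) - 1) / ((k : ℝ) + 1)) ^ 2 := by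
      have : e k = z ^ k * ((d + k).choose k : ℝ) *
          (Real.log (((d : ℝ) + k) / ((k : ℝ) + 1)) - ((d : ℝ) - 1) / ((k : ℝ) + 1)) := by
        simp only [he, hf, hm]; ring
      rw [this, abs_mul, abs_of_nonneg (by positivity : (0:ℝ) ≤ z ^ k * ((d + k).choose k : ℝ))]
      exact mul_le_mul_of_nonneg_left hlog (by positivity)
    refine h1'.trans ?_
    have hc2 := choose_id2 d k (by omega)
    have hCk2 : ((d + k).choose (k + 2) : ℝ) =
        (d : ℝ) * ((d : ℝ) - 1) * ((d + k).choose k : ℝ) / (((k : ℝ) + 1) * ((k : ℝ) + 2)) := by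
      field_simp
      linarith [hc2]
    rw [← sub_nonneg]
    have hEq : 2 * ((d : ℝ) - 1) / d * (((d + k).choose (k + 2) : ℝ) * z ^ k) -
        z ^ k * ((d + k).choose k : ℝ) * (((d : ℝ) - 1) / ((k : ℝ) + 1)) ^ 2 =
        ((d : ℝ) - 1) ^ 2 * ((d + k).choose k : ℝ) * z ^ k * k /
          ((((k : ℝ) + 1) ^ 2) * ((k : ℝ) + 2)) := by
      rw [hCk2]
      field_simp
      ring
    rw [hEq]
    positivity
  -- summability and sum bound for the comparison series
  have Hm2 : HasSum (fun k : ℕ => ((d - 2 + k).choose k : ℝ) * z ^ k) (1 / (1 - z) ^ (d - 1)) := by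
    have := aux_hasSum (d - 2) habs
    rwa [show d - 2 + 1 = d - 1 by omega] at this
  have Hshift2 : HasSum (fun k : ℕ => ((d - 2 + (k + 2)).choose (k + 2) : ℝ) * z ^ (k + 2))
      (1 / (1 - z) ^ (d - 1) - ∑ i ∈ range 2, ((d - 2 + i).choose i : ℝ) * z ^ i) :=
    (hasSum_nat_add_iff' (f := fun n : ℕ => ((d - 2 + n).choose n : ℝ) * z ^ n) 2).2 Hm2
  have hidx2 : ∀ k : ℕ, d - 2 + (k + 2) = d + k := fun k => by omega
  simp only [hidx2] at Hshift2
  have Hb : HasSum (fun k : ℕ => ((d + k).choose (k + 2) : ℝ) * z ^ k)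
      (z⁻¹ ^ 2 * (1 / (1 - z) ^ (d - 1) - ∑ i ∈ range 2, ((d - 2 + i).choose i : ℝ) * z ^ i)) := by
    have h := Hshift2.mul_left (z⁻¹ ^ 2)
    have e : (fun k : ℕ => ((d + k).choose (k + 2) : ℝ) * z ^ k) =
        fun k => z⁻¹ ^ 2 * (((d + k).choose (k + 2) : ℝ) * z ^ (k + 2)) := by
      funext k
      rw [pow_add]
      field_simp
    rw [e]; exact h
  have hs01 : 0 ≤ ∑ i ∈ range 2, ((d - 2 + i).choose i : ℝ) * z ^ i := by
    apply Finset.sum_nonneg; intro i _; positivity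
  have hbsum : Summable (fun k : ℕ =>
      2 * ((d : ℝ) - 1) / d * (((d + k).choose (k + 2) : ℝ) * z ^ k)) :=
    Hb.summable.mul_left _
  have habs_sum : Summable (fun k => |e k|) := hes.abs
  have hcoef : (0 : ℝ) ≤ 2 * ((d : ℝ) - 1) / d := by
    apply div_nonneg _ hdR.le; linarith
  calc |(∑' k : ℕ, f k) - ((d : ℝ) - 1) / d * z⁻¹ * (1 / (1 - z) ^ d - 1)|
      = |∑' k, e k| := by rw [hE.tsum_eq]
    _ ≤ ∑' k, |e k| := by
        have h1 : Summable fun k => ‖e k‖ := by simpa [Real.norm_eq_abs] using habs_sum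
        simpa [Real.norm_eq_abs] using norm_tsum_le_tsum_norm h1
    _ ≤ ∑' k, 2 * ((d : ℝ) - 1) / d * (((d + k).choose (k + 2) : ℝ) * z ^ k) :=
        Summable.tsum_le_tsum hbe habs_sum hbsum
    _ = 2 * ((d : ℝ) - 1) / d *
        (z⁻¹ ^ 2 * (1 / (1 - z) ^ (d - 1) - ∑ i ∈ range 2, ((d - 2 + i).choose i : ℝ) * z ^ i)) := by
        rw [tsum_mul_left, Hb.tsum_eq]
    _ ≤ 2 * ((d : ℝ) - 1) / d * z⁻¹ ^ 2 * (1 / (1 - z) ^ (d - 1)) := by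
        rw [mul_assoc]
        apply mul_le_mul_of_nonneg_left _ hcoef
        apply mul_le_mul_of_nonneg_left _ (by positivity : (0:ℝ) ≤ z⁻¹ ^ 2)
        linarith

lemma U_tendsto (d : ℕ) (hd : 2 ≤ d) :
    Tendsto (fun z : ℝ => (1 - z) ^ d *
        ∑' k : ℕ, z ^ k * ((d + k).choose k : ℝ) * Real.log (((d : ℝ) + k) / ((k : ℝ) + 1)))
      (nhdsWithin 1 (Set.Ioo (0 : ℝ) 1)) (nhds (((d : ℝ) - 1) / d)) := by
  have hdR : (0 : ℝ) < (d : ℝ) := by exact_mod_cast (by omega : 0 < d)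
  set M : ℝ → ℝ := fun z => ((d : ℝ) - 1) / d * (z⁻¹ * (1 - (1 - z) ^ d)) with hM
  have hMlim : Tendsto M (nhdsWithin 1 (Set.Ioo (0 : ℝ) 1)) (nhds (((d : ℝ) - 1) / d)) := by
    have hc : ContinuousAt M 1 := by
      apply ContinuousAt.mul continuousAt_const
      apply ContinuousAt.mul (continuousAt_inv₀ one_ne_zero)
      exact (continuousAt_const.sub ((continuousAt_const.sub continuousAt_id).pow d))
    have hval : M 1 = ((d : ℝ) - 1) / d := by
      simp [hM, zero_pow (by omega : d ≠ 0)]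
    have := hc.tendsto.mono_left (nhdsWithin_le_nhds (s := Set.Ioo (0:ℝ) 1))
    rwa [hval] at this
  have hErr : Tendsto (fun z : ℝ => (1 - z) ^ d *
      (∑' k : ℕ, z ^ k * ((d + k).choose k : ℝ) * Real.log (((d : ℝ) + k) / ((k : ℝ) + 1))) - M z)
      (nhdsWithin 1 (Set.Ioo (0 : ℝ) 1)) (nhds 0) := by
    apply squeeze_zero_norm' (a := fun z : ℝ => 2 * ((d : ℝ) - 1) / d * z⁻¹ ^ 2 * (1 - z))
    · filter_upwards [self_mem_nhdsWithin] with z hz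
      obtain ⟨h0, h1⟩ := hz
      have h1z : (0 : ℝ) < 1 - z := by linarith
      have hpd : (0 : ℝ) < (1 - z) ^ d := pow_pos h1z d
      have hpd1 : (0 : ℝ) < (1 - z) ^ (d - 1) := pow_pos h1z (d - 1)
      have hbound := tsum_error_bound d hd h0 h1
      have key : (1 - z) ^ d *
          (∑' k : ℕ, z ^ k * ((d + k).choose k : ℝ) * Real.log (((d : ℝ) + k) / ((k : ℝ) + 1))) - M z =
          (1 - z) ^ d *
          ((∑' k : ℕ, z ^ k * ((d + k).choose k : ℝ) * Real.log (((d : ℝ) + k) / ((k : ℝ) + 1))) -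
            ((d : ℝ) - 1) / d * z⁻¹ * (1 / (1 - z) ^ d - 1)) := by
        rw [hM]
        field_simp
      rw [key, Real.norm_eq_abs, abs_mul, abs_of_pos hpd]
      calc (1 - z) ^ d * |_| ≤ (1 - z) ^ d *
          (2 * ((d : ℝ) - 1) / d * z⁻¹ ^ 2 * (1 / (1 - z) ^ (d - 1))) :=
            mul_le_mul_of_nonneg_left hbound hpd.le
        _ = 2 * ((d : ℝ) - 1) / d * z⁻¹ ^ 2 * (1 - z) := by
            have hsplit : (1 - z) ^ d = (1 - z) ^ (d - 1) * (1 - z) := by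
              rw [← pow_succ]; congr 1; omega
            rw [hsplit]
            field_simp
    · have hc : ContinuousAt (fun z : ℝ => 2 * ((d : ℝ) - 1) / d * z⁻¹ ^ 2 * (1 - z)) 1 := by
        apply ContinuousAt.mul
        · exact continuousAt_const.mul ((continuousAt_inv₀ one_ne_zero).pow 2)
        · exact continuousAt_const.sub continuousAt_id
      have hval : (2 * ((d : ℝ) - 1) / d * (1 : ℝ)⁻¹ ^ 2 * (1 - 1)) = 0 := by norm_num
      have := hc.tendsto.mono_left (nhdsWithin_le_nhds (s := Set.Ioo (0:ℝ) 1))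
      rwa [hval] at this
  have hsum := hMlim.add hErr
  rw [add_zero] at hsum
  exact hsum.congr fun z => by ring

lemma cast_sub_aux (d j : ℕ) (hd : 2 ≤ d) (hj : j < d) :
    ((d - 1 - j : ℕ) : ℝ) = (d : ℝ) - 1 - j := by
  have h2 : d - 1 - j = d - (1 + j) := by omega
  rw [h2, Nat.cast_sub (by omega : 1 + j ≤ d)]
  push_cast; ring

lemma refl_log (d : ℕ) (hd : 2 ≤ d) (j : ℕ) (hj : j < d) :
    Real.log (((d : ℝ) - ((d - 1 - j : ℕ) : ℝ)) / (((d - 1 - j : ℕ) : ℝ) + 1)) =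
      - Real.log (((d : ℝ) - j) / ((j : ℝ) + 1)) := by
  have hc := cast_sub_aux d j hd hj
  have hjd : (j : ℝ) < (d : ℝ) := by exact_mod_cast hj
  have h1 : (0 : ℝ) < (j : ℝ) + 1 := by positivity
  have h2 : (0 : ℝ) < (d : ℝ) - j := by linarith
  rw [hc, show (d : ℝ) - ((d : ℝ) - 1 - j) = (j : ℝ) + 1 by ring,
    show (d : ℝ) - 1 - j + 1 = (d : ℝ) - j by ring,
    Real.log_div h1.ne' h2.ne', Real.log_div h2.ne' h1.ne']
  ring

lemma sum_log_zero (d : ℕ) (hd : 2 ≤ d) :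
    ∑ k ∈ range d, ((d - 1).choose k : ℝ) * Real.log (((d : ℝ) - k) / ((k : ℝ) + 1)) = 0 := by
  have h := Finset.sum_range_reflect
    (fun k => ((d - 1).choose k : ℝ) * Real.log (((d : ℝ) - k) / ((k : ℝ) + 1))) d
  have h2 : ∀ j ∈ range d,
      ((d - 1).choose (d - 1 - j) : ℝ) *
        Real.log (((d : ℝ) - ((d - 1 - j : ℕ) : ℝ)) / (((d - 1 - j : ℕ) : ℝ) + 1)) =
      - (((d - 1).choose j : ℝ) * Real.log (((d : ℝ) - j) / ((j : ℝ) + 1))) := by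
    intro j hj
    rw [Finset.mem_range] at hj
    rw [Nat.choose_symm (by omega : j ≤ d - 1), refl_log d hd j hj]
    ring
  rw [Finset.sum_congr rfl h2, Finset.sum_neg_distrib] at h
  linarith

lemma t_refl (d : ℕ) (hd : 2 ≤ d) (j : ℕ) (hj : j < d) :
    ((d : ℝ) - 1 - 2 * ((d - 1 - j : ℕ) : ℝ)) * ((d - 1).choose (d - 1 - j) : ℝ) *
      Real.log (((d : ℝ) - ((d - 1 - j : ℕ) : ℝ)) / (((d - 1 - j : ℕ) : ℝ) + 1)) =
    ((d : ℝ) - 1 - 2 * j) * ((d - 1).choose j : ℝ) *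
      Real.log (((d : ℝ) - j) / ((j : ℝ) + 1)) := by
  rw [Nat.choose_symm (by omega : j ≤ d - 1), refl_log d hd j hj, cast_sub_aux d j hd hj]
  ring

lemma sum_k_log (d : ℕ) (hd : 2 ≤ d) :
    ∑ k ∈ range d, (k : ℝ) *
        (((d - 1).choose k : ℝ) * Real.log (((d : ℝ) - k) / ((k : ℝ) + 1))) =
      - ∑ k ∈ range ((d - 1) / 2 + 1),
          ((d : ℝ) - 1 - 2 * k) * ((d - 1).choose k : ℝ) *
            Real.log (((d : ℝ) - k) / ((k : ℝ) + 1)) := by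
  set t : ℕ → ℝ := fun k => ((d : ℝ) - 1 - 2 * k) * ((d - 1).choose k : ℝ) *
    Real.log (((d : ℝ) - k) / ((k : ℝ) + 1)) with ht
  set m := (d - 1) / 2 + 1 with hm
  have hmd : m ≤ d := by omega
  have htr : ∀ j, j < d → t (d - 1 - j) = t j := by
    intro j hj
    exact t_refl d hd j hj
  have hsplit : ∑ k ∈ range d, t k = ∑ k ∈ range m, t k + ∑ j ∈ range (d - m), t (m + j) := by
    have h := Finset.sum_range_add t m (d - m)
    rwa [show m + (d - m) = d by omega] at h
  have htail : ∑ j ∈ range (d - m), t (m + j) = ∑ j ∈ range (d - m), t j := by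
    rw [← Finset.sum_range_reflect (fun j => t (m + j)) (d - m)]
    apply Finset.sum_congr rfl
    intro j hj
    rw [Finset.mem_range] at hj
    rw [show m + (d - m - 1 - j) = d - 1 - j by omega, htr j (by omega)]
  have hfull : ∑ k ∈ range d, t k = 2 * ∑ k ∈ range m, t k := by
    rcases Nat.even_or_odd d with he | ho
    · have hdm : d - m = m := by
        obtain ⟨r, hr⟩ := he; omega
      rw [hsplit, htail, hdm]; ring
    · obtain ⟨r, hr⟩ := ho
      have hmr : m = r + 1 := by omega
      have hdm : d - m = r := by omega
      have htm : t r = 0 := by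
        have hc : (d : ℝ) = 2 * r + 1 := by exact_mod_cast hr
        have hz : (d : ℝ) - 1 - 2 * r = 0 := by linarith
        simp [ht, hz]
      have hsm : ∑ k ∈ range m, t k = ∑ k ∈ range r, t k := by
        rw [hmr, Finset.sum_range_succ, htm, add_zero]
      rw [hsplit, htail, hdm, ← hsm]; ring
  have hexp : ∑ k ∈ range d, t k =
      ((d : ℝ) - 1) * (∑ k ∈ range d,
        ((d - 1).choose k : ℝ) * Real.log (((d : ℝ) - k) / ((k : ℝ) + 1))) -
      2 * ∑ k ∈ range d, (k : ℝ) *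
        (((d - 1).choose k : ℝ) * Real.log (((d : ℝ) - k) / ((k : ℝ) + 1))) := by
    rw [Finset.mul_sum, Finset.mul_sum, ← Finset.sum_sub_distrib]
    apply Finset.sum_congr rfl
    intro k _
    rw [ht]; ring
  rw [sum_log_zero d hd, mul_zero, zero_sub] at hexp
  have := hfull.symm.trans hexp
  linarith

set_option maxHeartbeats 1000000 in
/-- In the infinite acceleration limit `z → 1⁻`, the ratio of the quantum
capacities of the Grassmann channel and of the Unruh channel converges to the
finite constant `r_d` (up to the common factor `1/ln d`). -/
theorem grassmann_unruh_capacity_ratio_limit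
    (d : ℕ) (hd : 2 ≤ d) :
    Filter.Tendsto
      (fun z : ℝ =>
        ((1 / (1 + z) ^ (d - 1)) *
          ∑ k ∈ Finset.range d,
            z ^ k * ((d - 1).choose k : ℝ) *
              Real.log (((d : ℝ) - k) / ((k : ℝ) + 1))) /
        (((1 - z) ^ (d + 1) / (d : ℝ)) *
          ∑' k : ℕ, z ^ k * ((k : ℝ) + 1) * ((d + k).choose (k + 1) : ℝ) *
            Real.log (((d : ℝ) + k) / ((k : ℝ) + 1))))
      (nhdsWithin 1 (Set.Ioo (0 : ℝ) 1))
      (nhds (((d : ℝ) / ((d : ℝ) - 1)) * (1 / 2 ^ (d - 1)) *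
        ∑ k ∈ Finset.range ((d - 1) / 2 + 1),
          ((d : ℝ) - 1 - 2 * k) * ((d - 1).choose k : ℝ) *
            Real.log (((d : ℝ) - k) / ((k : ℝ) + 1)))) := by
  have hdR : (0 : ℝ) < (d : ℝ) := by exact_mod_cast (by omega : 0 < d)
  have hd2R : (2 : ℝ) ≤ (d : ℝ) := by exact_mod_cast hd
  have hd1R : (0 : ℝ) < (d : ℝ) - 1 := by linarith
  set c : ℕ → ℝ := fun k => ((d - 1).choose k : ℝ) *
    Real.log (((d : ℝ) - k) / ((k : ℝ) + 1)) with hc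
  set G : ℝ → ℝ := fun z => ∑ k ∈ range d, c k * ∑ j ∈ range k, z ^ j with hG
  have hGcont : Continuous G := by
    apply continuous_finset_sum
    intro k _
    exact continuous_const.mul (continuous_finset_sum _ fun j _ => continuous_pow j)
  have hG1 : G 1 = ∑ k ∈ range d, c k * k := by
    simp [hG]
  have hDen : Tendsto (fun z : ℝ => (1 + z) ^ (d - 1) * ((1 - z) ^ d *
      ∑' k : ℕ, z ^ k * ((d + k).choose k : ℝ) * Real.log (((d : ℝ) + k) / ((k : ℝ) + 1))))
      (nhdsWithin 1 (Set.Ioo (0 : ℝ) 1)) (nhds ((2 : ℝ) ^ (d - 1) * (((d : ℝ) - 1) / d))) := by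
    apply Tendsto.mul _ (U_tendsto d hd)
    have hct : ContinuousAt (fun z : ℝ => (1 + z) ^ (d - 1)) 1 := by fun_prop
    have h := hct.tendsto.mono_left
      (nhdsWithin_le_nhds (s := Set.Ioo (0 : ℝ) 1))
    convert h using 2
    norm_num
  have hNum : Tendsto (fun z : ℝ => -G z) (nhdsWithin 1 (Set.Ioo (0 : ℝ) 1)) (nhds (-G 1)) :=
    ((hGcont.neg).tendsto 1).mono_left (nhdsWithin_le_nhds (s := Set.Ioo (0 : ℝ) 1))
  have hden_ne : (2 : ℝ) ^ (d - 1) * (((d : ℝ) - 1) / d) ≠ 0 := by positivity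
  have hlim := hNum.div hDen hden_ne
  have hval : -G 1 / ((2 : ℝ) ^ (d - 1) * (((d : ℝ) - 1) / d)) =
      ((d : ℝ) / ((d : ℝ) - 1)) * (1 / 2 ^ (d - 1)) *
        ∑ k ∈ range ((d - 1) / 2 + 1), ((d : ℝ) - 1 - 2 * k) * ((d - 1).choose k : ℝ) *
          Real.log (((d : ℝ) - k) / ((k : ℝ) + 1)) := by
    rw [hG1]
    have hck : ∑ k ∈ range d, c k * k = ∑ k ∈ range d, (k : ℝ) *
        (((d - 1).choose k : ℝ) * Real.log (((d : ℝ) - k) / ((k : ℝ) + 1))) := by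
      apply Finset.sum_congr rfl
      intro k _
      simp only [hc]
      ring
    rw [hck, sum_k_log d hd, neg_neg]
    have h2ne : ((2 : ℝ) ^ (d - 1)) ≠ 0 := by positivity
    field_simp
  rw [← hval]
  refine Tendsto.congr' ?_ hlim
  filter_upwards [self_mem_nhdsWithin] with z hz
  obtain ⟨h0, h1⟩ := hz
  have h1z : (1 : ℝ) - z ≠ 0 := ne_of_gt (by linarith)
  have h1pz : (0 : ℝ) < 1 + z := by linarith
  -- rewrite the tsum
  have htsum : (∑' k : ℕ, z ^ k * ((k : ℝ) + 1) * ((d + k).choose (k + 1) : ℝ) *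
      Real.log (((d : ℝ) + k) / ((k : ℝ) + 1))) =
      (d : ℝ) * ∑' k : ℕ, z ^ k * ((d + k).choose k : ℝ) *
        Real.log (((d : ℝ) + k) / ((k : ℝ) + 1)) := by
    rw [← tsum_mul_left]
    apply tsum_congr
    intro k
    have hcid := choose_id1 d k
    linear_combination (z ^ k * Real.log (((d : ℝ) + k) / ((k : ℝ) + 1))) * hcid
  -- rewrite the finite sum
  have hFact : ∑ k ∈ range d, z ^ k * ((d - 1).choose k : ℝ) *
      Real.log (((d : ℝ) - k) / ((k : ℝ) + 1)) = (z - 1) * G z := by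
    calc ∑ k ∈ range d, z ^ k * ((d - 1).choose k : ℝ) *
        Real.log (((d : ℝ) - k) / ((k : ℝ) + 1))
        = ∑ k ∈ range d, (c k * ((∑ j ∈ range k, z ^ j) * (z - 1)) + c k) := by
          apply Finset.sum_congr rfl
          intro k _
          rw [geom_sum_mul]
          simp only [hc]
          ring
      _ = (z - 1) * G z + ∑ k ∈ range d, c k := by
          rw [Finset.sum_add_distrib, hG, Finset.mul_sum]
          congr 1
          apply Finset.sum_congr rfl
          intro k _
          ring
      _ = (z - 1) * G z := by
          have h0' := sum_log_zero d hd
          simp only [hc]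
          rw [h0', add_zero]
  rw [htsum, hFact]
  rcases eq_or_ne (∑' k : ℕ, z ^ k * ((d + k).choose k : ℝ) *
      Real.log (((d : ℝ) + k) / ((k : ℝ) + 1))) 0 with ht | ht
  · simp [ht]
  · simp only [Pi.div_apply]
    field_simp
    ring
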